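/- For any finite group G and integer k ≥ 2, the probability that a uniformly random k-tuple of elements of G pairwise commutes equals c_G(k-1)/|G|^{k-1}; that is, |G^{(k)}| = c_G(k-1)·|G|. -/

import Mathlib

open MulAction

/-- The number of orbits of a group `G` acting by simultaneous conjugation on the set
of `m`-tuples of pairwise commuting elements of `G`. -/
noncomputable def commClassCount (G : Type*) [Group G] (m : ℕ) : ℕ :=
  Nat.card (Quot (fun v w : {v : Fin m → G // ∀ i j, Commute (v i) (v j)} =>
    ∃ g : G, ∀ i, g * v.1 i * g⁻¹ = w.1 i))

section Aux

variable (G : Type*) [Group G] (m : ℕ)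

abbrev CommTuples := {v : Fin m → G // ∀ i j, Commute (v i) (v j)}

instance : MulAction G (CommTuples G m) where
  smul g v := ⟨fun i => g * v.1 i * g⁻¹, fun i j => by
    simpa using ((v.2 i j).map (MulAut.conj g).toMonoidHom)⟩
  one_smul v := by ext i; simp [HSMul.hSMul, SMul.smul]
  mul_smul g h v := by ext i; simp [HSMul.hSMul, SMul.smul, mul_assoc]

lemma smul_def (g : G) (v : CommTuples G m) (i : Fin m) :
    (g • v).1 i = g * v.1 i * g⁻¹ := rfl

lemma commCC_eq_orbits :
    commClassCount G m = Nat.card (Quotient (orbitRel G (CommTuples G m))) := by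
  unfold commClassCount
  refine Nat.card_congr (Quot.congrRight fun v w => ?_)
  show (∃ g : G, ∀ i, g * v.1 i * g⁻¹ = w.1 i) ↔ orbitRel G (CommTuples G m) v w
  constructor
  · rintro ⟨g, hg⟩
    refine ⟨g⁻¹, ?_⟩
    ext i
    simp only [smul_def, ← hg i]
    group
  · rintro ⟨g, rfl⟩
    exact ⟨g⁻¹, fun i => by simp only [smul_def]; group⟩

/-- splitting a commuting `(m+1)`-tuple into its head and its tail (fixed by the head). -/
def splitEquiv : {v : Fin (m + 1) → G // ∀ i j, Commute (v i) (v j)} ≃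
    Σ g : G, fixedBy (CommTuples G m) g where
  toFun w := ⟨w.1 0, ⟨fun i => w.1 i.succ, fun i j => w.2 i.succ j.succ⟩, by
    show _ • _ = _
    ext i
    have h := (w.2 0 i.succ).eq
    simp only [smul_def]
    rw [h, mul_inv_cancel_right]⟩
  invFun p := ⟨Fin.cons p.1 (fun i => p.2.1.1 i), by
    have hfix : ∀ i, Commute p.1 (p.2.1.1 i) := by
      intro i
      have h := congrArg (fun v : CommTuples G m => v.1 i) p.2.2
      simp only [smul_def] at h
      exact mul_inv_eq_iff_eq_mul.mp h
    intro i j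
    refine Fin.cases ?_ (fun i' => ?_) i <;> refine Fin.cases ?_ (fun j' => ?_) j
    · exact Commute.refl _
    · simpa using hfix j'
    · simpa using (hfix i').symm
    · simpa using p.2.1.2 i' j'⟩
  left_inv w := by
    ext i
    refine Fin.cases rfl (fun i' => rfl) i
  right_inv p := by
    refine Sigma.ext rfl ?_
    simp only [heq_eq_eq]
    apply heq_of_eq
    ext i
    rfl

end Aux

/-- `|G^{(k)}| = c_G(k-1)·|G|`, i.e. the probability that a uniformly random `k`-tuple of
elements of `G` pairwise commutes equals `c_G(k-1)/|G|^{k-1}`. -/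
theorem stmt_6 (G : Type*) [Group G] [Finite G] (k : ℕ) (hk : 2 ≤ k) :
    Nat.card {v : Fin k → G // ∀ i j, Commute (v i) (v j)} =
      commClassCount G (k - 1) * Nat.card G := by
  classical
  obtain ⟨m, rfl⟩ : ∃ m, k = m + 1 := ⟨k - 1, by omega⟩
  simp only [Nat.add_sub_cancel]
  have : Fintype G := Fintype.ofFinite G
  have : Fintype (CommTuples G m) := Fintype.ofFinite _
  have : ∀ g : G, Fintype (fixedBy (CommTuples G m) g) := fun g => Fintype.ofFinite _
  have : Fintype (Quotient (orbitRel G (CommTuples G m))) := Fintype.ofFinite _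
  rw [Nat.card_congr (splitEquiv G m), commCC_eq_orbits]
  rw [Nat.card_eq_fintype_card, Nat.card_eq_fintype_card, Nat.card_eq_fintype_card,
    Fintype.card_sigma]
  exact sum_card_fixedBy_eq_card_orbits_mul_card_group G (CommTuples G m)
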